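/- arXiv:2309.07932 — 2 statements merged into one kernel-verified Lean document; each statement's English description precedes it below -/
import Mathlib

section
/- There exists a Rule 110 spaceship background of spatial period 14 and temporal period 7: there is a configuration s : ℤ → Bool with s (i + 14) = s i for all i ∈ ℤ, s not identically false, and an integer d such that applying the Rule 110 global map seven times to s yields the translated configuration i ↦ s (i + d). -/
/-- The local transition function of the Rule 110 elementary cellular automaton:
`rule110 left center right` is the new state of the cell. -/
def rule110 : Bool → Bool → Bool → Bool
  | true,  true,  true  => false
  | true,  true,  false => true
  | true,  false, true  => true
  | true,  false, false => false
  | false, true,  true  => true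
  | false, true,  false => true
  | false, false, true  => true
  | false, false, false => false

/-- The global Rule 110 map on configurations indexed by ℤ. -/
def step (s : ℤ → Bool) : ℤ → Bool :=
  fun i => rule110 (s (i - 1)) (s i) (s (i + 1))

def stepF (f : ZMod 14 → Bool) : ZMod 14 → Bool :=
  fun j => rule110 (f (j - 1)) (f j) (f (j + 1))

def ether : ZMod 14 → Bool :=
  fun j => j = 3 ∨ j = 6 ∨ j = 7 ∨ j = 9 ∨ j = 10 ∨ j = 11 ∨ j = 12 ∨ j = 13

lemma step_comm (f : ZMod 14 → Bool) :
    step (fun i : ℤ => f (i : ZMod 14)) = fun i : ℤ => stepF f (i : ZMod 14) := by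
  funext i
  simp [step, stepF, Int.cast_sub, Int.cast_add, Int.cast_one]

lemma iter_comm (n : ℕ) (f : ZMod 14 → Bool) :
    step^[n] (fun i : ℤ => f (i : ZMod 14)) = fun i : ℤ => stepF^[n] f (i : ZMod 14) := by
  induction n generalizing f with
  | zero => rfl
  | succ n ih =>
    rw [Function.iterate_succ_apply, Function.iterate_succ_apply, step_comm, ih]

/-- There exists a Rule 110 spaceship background of spatial period 14 and
temporal period 7: a non-identically-false configuration of spatial period 14
which, after seven applications of the global map, is a translate of itself. -/
theorem rule110_spaceship_background :
    ∃ s : ℤ → Bool,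
      (∀ i : ℤ, s (i + 14) = s i) ∧
      (¬ ∀ i : ℤ, s i = false) ∧
      (∃ d : ℤ, step^[7] s = fun i => s (i + d)) := by
  refine ⟨fun i : ℤ => ether (i : ZMod 14), ?_, ?_, 0, ?_⟩
  · intro i
    push_cast
    rw [show (14:ZMod 14) = 0 by decide, add_zero]
  · intro h
    have := h 3
    simp [ether] at this
  · rw [iter_comm]
    have h7 : stepF^[7] ether = ether := by decide
    rw [h7]
    funext i
    norm_num
end

section
/- Let a, b, c, d, e, f be six distinct elements equipped with a strict linear order <. Assume e < d < c, e < f < a, b < c, and b < a. Assume further that any two of the pairs {a,f}, {b,c}, {d,e} are non-crossing with respect to <, and any two of the pairs {a,b}, {c,d}, {e,f} are non-crossing with respect to <. Then the linear order is exactly b < e < f < a < d < c or exactly b < e < d < c < f < a. (This is the combinatorial content of the paper's Hexagonal Folder lemma: the only flat-foldings of the hexagonal single-vertex crease pattern with region e upward-facing have layer orderings, from top to bottom, c > d > a > f > e > b or a > f > c > d > e > b.) -/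
/-- `Between x u y` means `u` lies strictly between `x` and `y` in the order. -/
def Between {α : Type*} [LinearOrder α] (x u y : α) : Prop :=
  (x < u ∧ u < y) ∨ (y < u ∧ u < x)

/-- Two disjoint unordered pairs `{x,y}` and `{u,v}` cross if exactly one of
`u`, `v` lies strictly between `x` and `y`. -/
def Crosses {α : Type*} [LinearOrder α] (x y u v : α) : Prop :=
  Xor' (Between x u y) (Between x v y)

lemma nbl {α : Type*} [LinearOrder α] {x u y : α} (h1 : u < x) (h2 : u < y) :
    ¬ Between x u y := by
  rintro (⟨h, _⟩ | ⟨h, _⟩)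
  · exact absurd h h1.asymm
  · exact absurd h h2.asymm

lemma nbr {α : Type*} [LinearOrder α] {x u y : α} (h1 : x < u) (h2 : y < u) :
    ¬ Between x u y := by
  rintro (⟨_, h⟩ | ⟨_, h⟩)
  · exact absurd h h2.asymm
  · exact absurd h h1.asymm

/-- The combinatorial content of the Hexagonal Folder lemma: the only layer
orderings compatible with the mountain-valley relations and the taco-taco
non-crossing conditions are `b < e < f < a < d < c` and `b < e < d < c < f < a`.
(In the paper's top-to-bottom notation: `c > d > a > f > e > b` or
`a > f > c > d > e > b`.) -/
theorem hexagonal_folder {α : Type*} [LinearOrder α] (a b c d e f : α)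
    (hdistinct : [a, b, c, d, e, f].Pairwise (· ≠ ·))
    (hed : e < d) (hdc : d < c) (hef : e < f) (hfa : f < a)
    (hbc : b < c) (hba : b < a)
    -- taco-taco non-crossing among the pairs {a,f}, {b,c}, {d,e}
    (h1 : ¬ Crosses a f b c) (h2 : ¬ Crosses a f d e) (h3 : ¬ Crosses b c d e)
    -- taco-taco non-crossing among the pairs {a,b}, {c,d}, {e,f}
    (h4 : ¬ Crosses a b c d) (h5 : ¬ Crosses a b e f) (h6 : ¬ Crosses c d e f) :
    (b < e ∧ e < f ∧ f < a ∧ a < d ∧ d < c) ∨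
    (b < e ∧ e < d ∧ d < c ∧ c < f ∧ f < a) := by
  simp only [List.pairwise_cons, List.mem_cons, List.not_mem_nil, or_false,
    forall_eq_or_imp, forall_eq, List.Pairwise.nil, and_true] at hdistinct
  obtain ⟨⟨hab, hac, had, hae, haf⟩, ⟨hb_c, hbd, hbe', hbf⟩, ⟨hcd, hce, hcf⟩,
    ⟨hde, hdf⟩, hef'⟩ := hdistinct
  have hea : e < a := hef.trans hfa
  -- Step 1: b < e
  have hbe : b < e := by
    rcases lt_trichotomy b e with h | h | h
    · exact h
    · exact absurd h hbe'
    · -- e < b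
      rcases lt_trichotomy b f with hbf' | hbf' | hbf'
      · -- e < b < f : crosses {a,b} {e,f}
        exact absurd (Or.inr ⟨Or.inr ⟨hbf', hfa⟩, nbl hea h⟩) h5
      · exact absurd hbf' hbf
      · -- f < b < a
        rcases lt_trichotomy c a with hca | hca | hca
        · -- f < c < a (since f < b < c)
          rcases lt_trichotomy d b with hdb | hdb | hdb
          · -- d < b: crosses {a,b} {c,d}
            exact absurd (Or.inl ⟨Or.inr ⟨hbc, hca⟩,
              nbl (hdc.trans hca) hdb⟩) h4
          · exact absurd hdb.symm hbd
          · -- b < d: order f < b < d < c < a; crosses {a,f} {d,e}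
            exact absurd (Or.inl ⟨Or.inr ⟨hbf'.trans hdb, hdc.trans hca⟩,
              nbl hea hef⟩) h2
        · exact absurd hca.symm hac
        · -- a < c: crosses {a,f} {b,c}
          exact absurd (Or.inl ⟨Or.inr ⟨hbf', hba⟩, nbr hca (hfa.trans hca)⟩) h1
  -- Step 2: split on d vs f
  rcases lt_trichotomy d f with hdf' | hdf' | hdf'
  · -- d < f : must have c < f (else crosses {c,d} {e,f})
    rcases lt_trichotomy f c with hfc | hfc | hfc
    · exact absurd (Or.inr ⟨Or.inr ⟨hdf', hfc⟩, nbl (hed.trans hdc) hed⟩) h6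
    · exact absurd hfc.symm hcf
    · exact Or.inr ⟨hbe, hed, hdc, hfc, hfa⟩
  · exact absurd hdf' hdf
  · -- f < d : must have a < d (else crosses {a,f} {d,e})
    rcases lt_trichotomy d a with hda | hda | hda
    · exact absurd (Or.inl ⟨Or.inr ⟨hdf', hda⟩, nbl hea hef⟩) h2
    · exact absurd hda had.symm
    · exact Or.inl ⟨hbe, hef, hfa, hda, hdc⟩
end
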